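/- Let S be a finite set of weighted points in the plane and R > 0. If a point x lies outside the convex hull of the union of the closed disks of radius R/2 centered at points of S, then there exists a point y with dist(x,y) ≥ R such that every v ∈ S satisfies dist(v,y) < dist(v,x); consequently W*(x) ≥ W(S). -/

import Mathlib

open scoped RealInnerProductSpace
open scoped Pointwise

noncomputable section

/-- The Euclidean plane. -/
abbrev Plane := EuclideanSpace ℝ (Fin 2)

/-- The point of the plane with coordinates `(a, b)`. -/
def pt (a b : ℝ) : Plane := (WithLp.equiv 2 (Fin 2 → ℝ)).symm ![a, b]

/-- `Wcap V w x y` = total weight of customers in `V` strictly closer to `y` than to `x`. -/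
def Wcap (V : Finset Plane) (w : Plane → ℝ) (x y : Plane) : ℝ :=
  ∑ v ∈ V, if dist v y < dist v x then w v else 0

/-- `Wstar V w R x` = the weight loss of `x`: the supremum of captures over feasible
follower positions `y` with `dist x y ≥ R`. -/
def Wstar (V : Finset Plane) (w : Plane → ℝ) (R : ℝ) (x : Plane) : ℝ :=
  sSup (Wcap V w x '' {y : Plane | R ≤ dist x y})

/-- Unit direction of polar angle `θ`. -/
def dir (θ : ℝ) : Plane := pt (Real.cos θ) (Real.sin θ)

/-- `Wang V w R x θ` = capture of the follower placed at `x + R•(cos θ, sin θ)` against `x`. -/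
def Wang (V : Finset Plane) (w : Plane → ℝ) (R : ℝ) (x : Plane) (θ : ℝ) : ℝ :=
  Wcap V w x (x + R • dir θ)

/-- The weight loss of `x`, as the supremum of captures over the circle of radius `R`. -/
def WstarC (V : Finset Plane) (w : Plane → ℝ) (R : ℝ) (x : Plane) : ℝ :=
  sSup (Set.range (Wang V w R x))

lemma norm_dir (θ : ℝ) : ‖dir θ‖ = 1 := by
  rw [EuclideanSpace.norm_eq]
  simp [dir, pt, Fin.sum_univ_two, Real.norm_eq_abs, sq_abs]

/-- if `x` is outside the convex hull of the disks of radius `R/2` around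
the points of `S`, then some feasible follower position captures all of `S`, hence
captures weight at least `W(S)`. -/
theorem stmt_2 (V S : Finset Plane) (hSV : S ⊆ V) (w : Plane → ℝ) (hw : ∀ v ∈ V, 0 < w v)
    (R : ℝ) (hR : 0 < R) (x : Plane)
    (hx : x ∉ convexHull ℝ (⋃ v ∈ S, Metric.closedBall v (R / 2))) :
    ∃ y : Plane, R ≤ dist x y ∧ (∀ v ∈ S, dist v y < dist v x) ∧
      (∑ v ∈ S, w v) ≤ Wcap V w x y := by
  have key : ∀ y, (∀ v ∈ S, dist v y < dist v x) → (∑ v ∈ S, w v) ≤ Wcap V w x y := by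
    intro y hy
    unfold Wcap
    calc ∑ v ∈ S, w v = ∑ v ∈ S, (if dist v y < dist v x then w v else 0) := by
          apply Finset.sum_congr rfl; intro v hv; rw [if_pos (hy v hv)]
      _ ≤ ∑ v ∈ V, (if dist v y < dist v x then w v else 0) := by
          apply Finset.sum_le_sum_of_subset_of_nonneg hSV
          intro v hv _
          split
          · exact (hw v hv).le
          · exact le_rfl
  rcases S.eq_empty_or_nonempty with rfl | hSne
  · refine ⟨x + R • dir 0, ?_, by simp, key _ (by simp)⟩
    have hd : dist x (x + R • dir 0) = R := by
      rw [dist_eq_norm]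
      simp only [add_sub_cancel_left, sub_add_cancel_left, norm_neg, norm_smul, norm_dir,
        mul_one, Real.norm_eq_abs, abs_of_pos hR]
    rw [hd]
  · set K : Set Plane := convexHull ℝ (S : Set Plane) with hK
    have hKconv : Convex ℝ K := convex_convexHull ℝ _
    have hKne : K.Nonempty := (Finset.coe_nonempty.mpr hSne).mono (subset_convexHull ℝ _)
    have hKcompact : IsCompact K := S.finite_toSet.isCompact_convexHull ℝ
    obtain ⟨p, hpK, hpmin⟩ := exists_norm_eq_iInf_of_complete_convex hKne
      hKcompact.isClosed.isComplete hKconv x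
    have hproj : ∀ v ∈ K, ⟪x - p, v - p⟫ ≤ 0 :=
      (norm_eq_iInf_iff_real_inner_le_zero hKconv hpK).mp hpmin
    set d : ℝ := ‖x - p‖ with hd
    have hfar : R / 2 < d := by
      by_contra h
      push_neg at h
      apply hx
      have hx' : x ∈ convexHull ℝ ((S : Set Plane) + ({x - p} : Set Plane)) := by
        rw [convexHull_add, convexHull_singleton]
        exact ⟨p, hpK, x - p, rfl, by module⟩
      refine convexHull_mono ?_ hx'
      rintro z ⟨v, hv, b, hb, rfl⟩
      rcases hb with rfl
      refine Set.mem_biUnion hv ?_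
      simp only [Metric.mem_closedBall]
      rw [dist_eq_norm]
      simpa using h
    have hdpos : 0 < d := lt_of_le_of_lt (by positivity) hfar
    set u : Plane := d⁻¹ • (x - p) with hu
    have hnu : ‖u‖ = 1 := by
      rw [hu, norm_smul, Real.norm_eq_abs, abs_of_pos (inv_pos.mpr hdpos), ← hd,
        inv_mul_cancel₀ hdpos.ne']
    have hclose : ∀ v ∈ S, dist v (x - R • u) < dist v x := by
      intro v hv
      have hvK : v ∈ K := subset_convexHull ℝ _ hv
      have h1 : ⟪x - p, v - p⟫ ≤ 0 := hproj v hvK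
      have h2 : d ^ 2 ≤ ⟪x - p, x - v⟫ := by
        have : ⟪x - p, x - v⟫ = ⟪x - p, x - p⟫ - ⟪x - p, v - p⟫ := by
          rw [← inner_sub_right]; congr 1; abel
        rw [this, real_inner_self_eq_norm_sq]
        linarith
      have h3 : ⟪v - x, u⟫ ≤ -d := by
        have : ⟪v - x, u⟫ = -(d⁻¹ * ⟪x - p, x - v⟫) := by
          rw [hu, real_inner_smul_right, real_inner_comm]
          rw [show (v - x : Plane) = -(x - v) by abel, inner_neg_right]
          ring
        rw [this]
        have := mul_le_mul_of_nonneg_left h2 (le_of_lt (inv_pos.mpr hdpos))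
        rw [show d⁻¹ * d ^ 2 = d by field_simp] at this
        linarith
      have hsq : dist v (x - R • u) ^ 2 < dist v x ^ 2 := by
        rw [dist_eq_norm, dist_eq_norm]
        have : v - (x - R • u) = (v - x) + R • u := by abel
        rw [this, norm_add_sq_real, real_inner_smul_right, norm_smul, Real.norm_eq_abs,
          abs_of_pos hR, hnu]
        nlinarith
      exact lt_of_pow_lt_pow_left₀ 2 dist_nonneg hsq
    refine ⟨x - R • u, ?_, hclose, key _ hclose⟩
    rw [dist_eq_norm]
    simp only [sub_sub_cancel, norm_smul, hnu, mul_one, Real.norm_eq_abs, abs_of_pos hR, le_refl]
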